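/- Let ϖ ∈ X be a dominant weight with (ϖ, α∨) ≤ 1 for every simple root α. Let λ = wϖ with w ∈ W of minimal length such that λ = wϖ. Suppose there is a simple root α_j such that (ϖ, α_j∨) = 1 and ℓ(w s_j) > ℓ(w). Let μ ∈ w(ϖ − ω_j) + Wω_j (i.e. μ = w(ϖ − ω_j) + z ω_j for some z ∈ W). Then (μ,μ) ≤ (ϖ,ϖ); and if (μ,μ) = (ϖ,ϖ), then μ = vϖ for some v ∈ W with v ≥ w in the Bruhat order. Consequently μ ≤_a λ. -/

import Mathlib

open scoped InnerProductSpace Classical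

noncomputable section

/-- A reduced crystallographic root system `Φ` spanning a finite-dimensional real inner
product space `V`, together with a choice of simple roots `π` (determining the positive
system), the corresponding fundamental weights `ω`, the reflections `s`, the Weyl group
`W` and the weight lattice `X`. -/
structure RootSystemData (V : Type) [NormedAddCommGroup V] [InnerProductSpace ℝ V]
    [FiniteDimensional ℝ V] where
  /-- the (finite) set of roots -/
  Φ : Finset V
  /-- the rank -/
  r : ℕ
  /-- the simple roots `α₁, …, α_r` -/
  π : Fin r → V
  /-- the fundamental weights `ω₁, …, ω_r` -/
  ω : Fin r → V
  /-- the orthogonal reflection attached to a root -/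
  s : V → (V ≃ₗ[ℝ] V)
  /-- the Weyl group -/
  W : Subgroup (V ≃ₗ[ℝ] V)
  /-- the weight lattice -/
  X : AddSubgroup V
  root_ne_zero : ∀ α ∈ Φ, α ≠ (0 : V)
  root_span : Submodule.span ℝ (Φ : Set V) = ⊤
  reduced : ∀ α ∈ Φ, ∀ c : ℝ, c • α ∈ Φ → c = 1 ∨ c = -1
  crystallographic : ∀ α ∈ Φ, ∀ β ∈ Φ, ∃ n : ℤ, 2 * ⟪β, α⟫_ℝ / ⟪α, α⟫_ℝ = (n : ℝ)
  s_apply : ∀ α ∈ Φ, ∀ v : V, s α v = v - (2 * ⟪v, α⟫_ℝ / ⟪α, α⟫_ℝ) • α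
  refl_stable : ∀ α ∈ Φ, ∀ β ∈ Φ, s α β ∈ Φ
  W_eq : W = Subgroup.closure {g : V ≃ₗ[ℝ] V | ∃ α ∈ Φ, g = s α}
  inner_invariant : ∀ g ∈ W, ∀ u v : V, ⟪g u, g v⟫_ℝ = ⟪u, v⟫_ℝ
  simple_mem : ∀ i, π i ∈ Φ
  simple_indep : LinearIndependent ℝ π
  pos_or_neg : ∀ α ∈ Φ,
      (∃ c : Fin r → ℝ, (∀ i, 0 ≤ c i) ∧ α = ∑ i, c i • π i) ∨
      (∃ c : Fin r → ℝ, (∀ i, 0 ≤ c i) ∧ -α = ∑ i, c i • π i)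
  fund : ∀ i j, 2 * ⟪ω i, π j⟫_ℝ / ⟪π j, π j⟫_ℝ = if i = j then (1 : ℝ) else 0
  X_eq : X = AddSubgroup.closure (Set.range ω)
  X_stable : ∀ g ∈ W, ∀ x ∈ X, g x ∈ X

/-- The pairing `(v, α∨) = 2(v,α)/(α,α)` of a vector with the coroot of `α`. -/
def pairing {V : Type} [NormedAddCommGroup V] [InnerProductSpace ℝ V]
    (v α : V) : ℝ := 2 * ⟪v, α⟫_ℝ / ⟪α, α⟫_ℝ

namespace RootSystemData

variable {V : Type} [NormedAddCommGroup V] [InnerProductSpace ℝ V] [FiniteDimensional ℝ V]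
variable (C : RootSystemData V)

/-- `α` is a nonnegative combination of the simple roots (a positive root, if `α ∈ Φ`). -/
def IsPos (α : V) : Prop := ∃ c : Fin C.r → ℝ, (∀ i, 0 ≤ c i) ∧ α = ∑ i, c i • C.π i

/-- `α` is a nonpositive combination of the simple roots (a negative root, if `α ∈ Φ`). -/
def IsNeg (α : V) : Prop := C.IsPos (-α)

/-- A weight is dominant if it pairs nonnegatively with all simple coroots. -/
def IsDominant (lam : V) : Prop := ∀ i, 0 ≤ pairing lam (C.π i)

/-- The product of the simple reflections along a word. -/
def wordProd (l : List (Fin C.r)) : V ≃ₗ[ℝ] V := (l.map fun i => C.s (C.π i)).prod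

/-- The length of `w`: the least length of an expression of `w` as a product of
simple reflections. -/
def length (w : V ≃ₗ[ℝ] V) : ℕ :=
  sInf {n | ∃ l : List (Fin C.r), l.length = n ∧ C.wordProd l = w}

/-- The (strong) Bruhat order on the Weyl group: `u ≤ v` iff `v` is obtained from `u`
by successively multiplying by reflections, increasing the length at each step. -/
def BruhatLE (u v : V ≃ₗ[ℝ] V) : Prop :=
  Relation.ReflTransGen
    (fun a b => (∃ α ∈ C.Φ, b = a * C.s α) ∧ C.length a < C.length b) u v

/-- The Steinberg weight `e_v = v⁻¹ ⬝ ∑_{i : v⁻¹ α_i < 0} ω_i`. -/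
def steinberg (v : V ≃ₗ[ℝ] V) : V :=
  v⁻¹ (∑ i ∈ Finset.univ.filter (fun i => C.IsNeg (v⁻¹ (C.π i))), C.ω i)

/-- The excellent order on weights: `λ ≤ₑ μ` iff `(λ,λ) < (μ,μ)`, or `λ = wν`, `μ = zν`
for some dominant `ν ∈ X` and `w ≤ z` in the Bruhat order. -/
def ExcLE (lam mu : V) : Prop :=
  ⟪lam, lam⟫_ℝ < ⟪mu, mu⟫_ℝ ∨
    ∃ nu ∈ C.X, C.IsDominant nu ∧
      ∃ w ∈ C.W, ∃ z ∈ C.W, C.BruhatLE w z ∧ lam = w nu ∧ mu = z nu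

/-- The strict excellent order. -/
def ExcLT (lam mu : V) : Prop := C.ExcLE lam mu ∧ lam ≠ mu

/-- The antipodal excellent order: `λ ≤ₐ μ` iff `-λ ≤ₑ -μ`. -/
def AntiLE (lam mu : V) : Prop := C.ExcLE (-lam) (-mu)

/-- The strict antipodal excellent order. -/
def AntiLT (lam mu : V) : Prop := C.AntiLE lam mu ∧ lam ≠ mu

/-- The dominance order: `μ ≤_d ν` iff `ν - μ` is a nonnegative integer combination of
the positive roots. -/
def DomLE (mu nu : V) : Prop :=
  ∃ c : V → ℕ, nu - mu = ∑ α ∈ C.Φ.filter (fun a => C.IsPos a), (c α : ℝ) • α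

theorem omega_mem (i : Fin C.r) : C.ω i ∈ C.X := by
  rw [C.X_eq]; exact AddSubgroup.subset_closure ⟨i, rfl⟩

theorem steinberg_mem {v : V ≃ₗ[ℝ] V} (hv : v ∈ C.W) : C.steinberg v ∈ C.X :=
  C.X_stable _ (inv_mem hv) _ (AddSubgroup.sum_mem _ fun i _ => C.omega_mem i)

/-- The group ring `ℤ[X]` of the weight lattice. -/
abbrev GroupRing := AddMonoidAlgebra ℤ ↥C.X

/-- The basis element `e^λ` of `ℤ[X]`. -/
def expo (x : V) (hx : x ∈ C.X) : C.GroupRing := AddMonoidAlgebra.single ⟨x, hx⟩ 1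

/-- `e^λ`, defined for all `λ : V` (and zero off the lattice). -/
def expoOf (x : V) : C.GroupRing := if hx : x ∈ C.X then C.expo x hx else 0

/-- The coefficient of `e^x` in an element of `ℤ[X]`. -/
def coeff (m : C.GroupRing) (x : ↥C.X) : ℤ := (AddMonoidAlgebra.coeff m : ↥C.X →₀ ℤ) x

/-- The support of an element of `ℤ[X]`. -/
def supp (m : C.GroupRing) : Finset ↥C.X := (AddMonoidAlgebra.coeff m : ↥C.X →₀ ℤ).support

/-- The action of `g ∈ W` on the weight lattice. -/
def actX (g : V ≃ₗ[ℝ] V) (hg : g ∈ C.W) : ↥C.X → ↥C.X :=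
  fun x => ⟨g x, C.X_stable g hg x.1 x.2⟩

/-- The action of `g ∈ W` on `ℤ[X]`, with `e^λ ↦ e^{gλ}`. -/
def wAct (g : V ≃ₗ[ℝ] V) (hg : g ∈ C.W) (m : C.GroupRing) : C.GroupRing :=
  AddMonoidAlgebra.ofCoeff (Finsupp.mapDomain (C.actX g hg) (AddMonoidAlgebra.coeff m))

/-- `m` lies in the invariant subring `ℤ[X]^W`. -/
def IsWInvariant (m : C.GroupRing) : Prop := ∀ g (hg : g ∈ C.W), C.wAct g hg m = m

/-- The parabolic subgroup `W_{Π'}` generated by the simple reflections `s_α, α ∈ Π'`,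
for a subset `Π'` of the simple roots (given by a subset `J` of the index set). -/
def parabolicSubgroup (J : Set (Fin C.r)) : Subgroup (V ≃ₗ[ℝ] V) :=
  Subgroup.closure {g | ∃ i ∈ J, g = C.s (C.π i)}

theorem parabolic_le (J : Set (Fin C.r)) : C.parabolicSubgroup J ≤ C.W := by
  refine (Subgroup.closure_le _).2 ?_
  rintro g ⟨i, _, rfl⟩
  rw [C.W_eq]
  exact Subgroup.subset_closure ⟨C.π i, C.simple_mem i, rfl⟩

/-- `m` lies in the invariant subring `ℤ[X]^H` for a subgroup `H ≤ W`. -/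
def IsInvariantUnder (H : Subgroup (V ≃ₗ[ℝ] V)) (hH : H ≤ C.W) (m : C.GroupRing) : Prop :=
  ∀ g (hg : g ∈ H), C.wAct g (hH hg) m = m

/-- `v` is of minimal length in its coset `v ⬝ W_{Π'}`. -/
def IsMinCosetRep (J : Set (Fin C.r)) (v : V ≃ₗ[ℝ] V) : Prop :=
  v ∈ C.W ∧ ∀ z ∈ C.parabolicSubgroup J, C.length v ≤ C.length (v * z)

/-- The subgroup generated by the simple reflections fixing a given vector. -/
def fixSubgroup (x : V) : Subgroup (V ≃ₗ[ℝ] V) :=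
  Subgroup.closure {g | ∃ i : Fin C.r, C.s (C.π i) x = x ∧ g = C.s (C.π i)}

end RootSystemData

set_option linter.unusedSectionVars false
namespace RootSystemData

variable {V : Type} [NormedAddCommGroup V] [InnerProductSpace ℝ V] [FiniteDimensional ℝ V]
variable (C : RootSystemData V)

@[simp] lemma mul_apply' (g h : V ≃ₗ[ℝ] V) (v : V) : (g * h) v = g (h v) := rfl
@[simp] lemma one_apply' (v : V) : (1 : V ≃ₗ[ℝ] V) v = v := rfl
@[simp] lemma inv_apply_self' (g : V ≃ₗ[ℝ] V) (v : V) : g⁻¹ (g v) = v := g.symm_apply_apply v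
@[simp] lemma apply_inv_self' (g : V ≃ₗ[ℝ] V) (v : V) : g (g⁻¹ v) = v := g.apply_symm_apply v

lemma root_inner_pos {α : V} (hα : α ∈ C.Φ) : 0 < ⟪α, α⟫_ℝ :=
  lt_of_le_of_ne real_inner_self_nonneg
    (Ne.symm (inner_self_ne_zero.2 (C.root_ne_zero α hα)))

lemma s_apply'' {α : V} (hα : α ∈ C.Φ) (v : V) :
    C.s α v = v - pairing v α • α := C.s_apply α hα v

lemma pairing_self {α : V} (hα : α ∈ C.Φ) : pairing α α = 2 := by
  have h0 : ⟪α, α⟫_ℝ ≠ 0 := ne_of_gt (C.root_inner_pos hα)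
  unfold pairing
  field_simp

lemma s_self {α : V} (hα : α ∈ C.Φ) : C.s α α = -α := by
  rw [C.s_apply'' hα, pairing_self C hα]
  module

lemma neg_root_mem {α : V} (hα : α ∈ C.Φ) : -α ∈ C.Φ := by
  have := C.refl_stable α hα α hα
  rwa [C.s_self hα] at this

lemma s_s {α : V} (hα : α ∈ C.Φ) (v : V) : C.s α (C.s α v) = v := by
  rw [C.s_apply'' hα, C.s_apply'' hα v]
  have h : pairing (v - pairing v α • α) α = - pairing v α := by
    unfold pairing
    rw [inner_sub_left, real_inner_smul_left]
    have h0 : ⟪α, α⟫_ℝ ≠ 0 := ne_of_gt (C.root_inner_pos hα)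
    field_simp
    ring
  rw [h]
  module

lemma s_mul_self {α : V} (hα : α ∈ C.Φ) : C.s α * C.s α = 1 :=
  LinearEquiv.toLinearMap_injective (LinearMap.ext fun v => C.s_s hα v)

lemma s_inv {α : V} (hα : α ∈ C.Φ) : (C.s α)⁻¹ = C.s α :=
  inv_eq_of_mul_eq_one_right (C.s_mul_self hα)

lemma s_mem {α : V} (hα : α ∈ C.Φ) : C.s α ∈ C.W := by
  rw [C.W_eq]
  exact Subgroup.subset_closure ⟨α, hα, rfl⟩

lemma W_maps_root {g : V ≃ₗ[ℝ] V} (hg : g ∈ C.W) {α : V} (hα : α ∈ C.Φ) : g α ∈ C.Φ := by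
  rw [C.W_eq] at hg
  have key : (∀ β ∈ C.Φ, g β ∈ C.Φ) ∧ (∀ β ∈ C.Φ, g⁻¹ β ∈ C.Φ) := by
    induction hg using Subgroup.closure_induction with
    | mem x hx =>
      obtain ⟨β, hβ, rfl⟩ := hx
      refine ⟨fun γ hγ => C.refl_stable β hβ γ hγ, fun γ hγ => ?_⟩
      rw [C.s_inv hβ]
      exact C.refl_stable β hβ γ hγ
    | one => simp
    | mul x y hx hy ihx ihy =>
      refine ⟨fun γ hγ => ?_, fun γ hγ => ?_⟩
      · simpa using ihx.1 _ (ihy.1 _ hγ)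
      · rw [mul_inv_rev]; simpa using ihy.2 _ (ihx.2 _ hγ)
    | inv x hx ihx => exact ⟨fun γ hγ => by simpa using ihx.2 γ hγ, fun γ hγ => by simpa using ihx.1 γ hγ⟩
  exact key.1 α hα

lemma inner_inv_left {g : V ≃ₗ[ℝ] V} (hg : g ∈ C.W) (u v : V) :
    ⟪g⁻¹ u, v⟫_ℝ = ⟪u, g v⟫_ℝ := by
  conv_rhs => rw [← apply_inv_self' g u]
  rw [C.inner_invariant g hg]

lemma pairing_map {g : V ≃ₗ[ℝ] V} (hg : g ∈ C.W) (u v : V) :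
    pairing (g u) (g v) = pairing u v := by
  unfold pairing
  rw [C.inner_invariant g hg, C.inner_invariant g hg]

lemma conj_s {g : V ≃ₗ[ℝ] V} (hg : g ∈ C.W) {α : V} (hα : α ∈ C.Φ) :
    g * C.s α * g⁻¹ = C.s (g α) := by
  refine LinearEquiv.toLinearMap_injective (LinearMap.ext fun v => ?_)
  have h1 : pairing (g⁻¹ v) α = pairing v (g α) := by
    unfold pairing
    rw [inner_inv_left C hg, ← C.inner_invariant g hg α α]
  show g (C.s α (g⁻¹ v)) = C.s (g α) v
  rw [C.s_apply'' hα, C.s_apply'' (C.W_maps_root hg hα), h1, map_sub, map_smul,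
    apply_inv_self']

end RootSystemData

namespace RootSystemData

variable {V : Type} [NormedAddCommGroup V] [InnerProductSpace ℝ V] [FiniteDimensional ℝ V]
variable (C : RootSystemData V)

lemma span_simple : Submodule.span ℝ (Set.range C.π) = ⊤ := by
  have hΦ : (C.Φ : Set V) ⊆ (Submodule.span ℝ (Set.range C.π) : Submodule ℝ V) := by
    intro α hα
    have key : ∀ c : Fin C.r → ℝ, (∑ i, c i • C.π i) ∈ Submodule.span ℝ (Set.range C.π) := by
      intro c
      exact Submodule.sum_mem _ fun i _ =>
        Submodule.smul_mem _ _ (Submodule.subset_span ⟨i, rfl⟩)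
    rcases C.pos_or_neg α hα with ⟨c, _, h⟩ | ⟨c, _, h⟩
    · rw [h]; exact key c
    · have : -α ∈ Submodule.span ℝ (Set.range C.π) := h ▸ key c
      simpa using Submodule.neg_mem _ this
  have := Submodule.span_le.2 hΦ
  rw [C.root_span] at this
  exact top_le_iff.1 this

/-- The simple roots as a basis of `V`. -/
def bas : Module.Basis (Fin C.r) ℝ V := Module.Basis.mk C.simple_indep (by rw [C.span_simple])

@[simp] lemma bas_apply (i : Fin C.r) : C.bas i = C.π i := Module.Basis.mk_apply _ _ _

/-- Coordinates with respect to the simple roots. -/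
def cf (v : V) (i : Fin C.r) : ℝ := C.bas.repr v i

@[simp] lemma cf_add (u v : V) (i : Fin C.r) : C.cf (u + v) i = C.cf u i + C.cf v i := by
  unfold cf; rw [map_add]; rfl

@[simp] lemma cf_sub (u v : V) (i : Fin C.r) : C.cf (u - v) i = C.cf u i - C.cf v i := by
  unfold cf; rw [map_sub]; rfl

@[simp] lemma cf_neg (v : V) (i : Fin C.r) : C.cf (-v) i = -C.cf v i := by
  unfold cf; rw [map_neg]; rfl

@[simp] lemma cf_smul (t : ℝ) (v : V) (i : Fin C.r) : C.cf (t • v) i = t * C.cf v i := by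
  unfold cf; rw [map_smul]; rfl

@[simp] lemma cf_zero (i : Fin C.r) : C.cf 0 i = 0 := by
  unfold cf; rw [map_zero]; rfl

lemma cf_finset_sum {ι : Type*} (s : Finset ι) (f : ι → V) (m : Fin C.r) :
    C.cf (∑ i ∈ s, f i) m = ∑ i ∈ s, C.cf (f i) m := by
  unfold cf
  rw [map_sum]
  simp [Finsupp.finset_sum_apply]

@[simp] lemma cf_simple (i m : Fin C.r) : C.cf (C.π i) m = if i = m then 1 else 0 := by
  unfold cf
  rw [← C.bas_apply, C.bas.repr_self]
  exact Finsupp.single_apply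

lemma cf_eq (v : V) : v = ∑ i, C.cf v i • C.π i := by
  conv_lhs => rw [← C.bas.sum_repr v]
  simp only [bas_apply]
  rfl

lemma cf_sum_simple (c : Fin C.r → ℝ) (m : Fin C.r) : C.cf (∑ i, c i • C.π i) m = c m := by
  rw [C.cf_finset_sum]
  simp [Finset.sum_ite_eq, mul_comm]

/-- All coordinates nonnegative. -/
def NN (v : V) : Prop := ∀ i, 0 ≤ C.cf v i

/-- All coordinates nonpositive. -/
def NP (v : V) : Prop := ∀ i, C.cf v i ≤ 0

lemma isPos_iff {v : V} : C.IsPos v ↔ C.NN v := by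
  constructor
  · rintro ⟨c, hc, rfl⟩ i
    rw [C.cf_sum_simple]
    exact hc i
  · intro h
    exact ⟨C.cf v, h, C.cf_eq v⟩

lemma isNeg_iff {v : V} : C.IsNeg v ↔ C.NP v := by
  rw [IsNeg, C.isPos_iff]
  constructor
  · intro h i; have := h i; simp at this; linarith
  · intro h i; simp; exact h i

lemma NN_neg_iff {v : V} : C.NN (-v) ↔ C.NP v := by
  constructor
  · intro h i; have := h i; simp at this; linarith
  · intro h i; simp; exact h i

lemma eq_zero_of_NN_NP {v : V} (h1 : C.NN v) (h2 : C.NP v) : v = 0 := by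
  have : ∀ i, C.cf v i = 0 := fun i => le_antisymm (h2 i) (h1 i)
  rw [C.cf_eq v]
  simp [this]

lemma root_dichotomy {α : V} (hα : α ∈ C.Φ) : C.NN α ∨ C.NP α := by
  rcases C.pos_or_neg α hα with h | h
  · left; exact C.isPos_iff.1 h
  · right
    rw [← C.NN_neg_iff]
    exact C.isPos_iff.1 h

lemma root_not_both {α : V} (hα : α ∈ C.Φ) : ¬(C.NN α ∧ C.NP α) := by
  rintro ⟨h1, h2⟩
  exact C.root_ne_zero α hα (C.eq_zero_of_NN_NP h1 h2)

lemma root_NN_of_not_NP {α : V} (hα : α ∈ C.Φ) (h : ¬C.NP α) : C.NN α :=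
  (C.root_dichotomy hα).resolve_right h

lemma root_NP_of_not_NN {α : V} (hα : α ∈ C.Φ) (h : ¬C.NN α) : C.NP α :=
  (C.root_dichotomy hα).resolve_left h

/-- If `g` maps the simple roots in `J` to nonnegative vectors, it maps nonnegative
vectors supported on `J` to nonnegative vectors. -/
lemma NN_apply_of_support (g : V ≃ₗ[ℝ] V) (J : Set (Fin C.r)) {v : V} (hv : C.NN v)
    (hsupp : ∀ m ∉ J, C.cf v m = 0) (h : ∀ i ∈ J, C.NN (g (C.π i))) : C.NN (g v) := by
  intro m
  have : g v = ∑ i, C.cf v i • g (C.π i) := by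
    conv_lhs => rw [C.cf_eq v]
    rw [map_sum]
    simp
  rw [this, C.cf_finset_sum]
  refine Finset.sum_nonneg fun i _ => ?_
  rw [C.cf_smul]
  by_cases hi : i ∈ J
  · exact mul_nonneg (hv i) (h i hi m)
  · rw [hsupp i hi]; simp

lemma NN_apply (g : V ≃ₗ[ℝ] V) {v : V} (hv : C.NN v)
    (h : ∀ i, C.NN (g (C.π i))) : C.NN (g v) :=
  C.NN_apply_of_support g Set.univ hv (fun m hm => absurd (Set.mem_univ m) hm)
    (fun i _ => h i)

end RootSystemData

namespace RootSystemData

variable {V : Type} [NormedAddCommGroup V] [InnerProductSpace ℝ V] [FiniteDimensional ℝ V]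
variable (C : RootSystemData V)

lemma s_neg {α : V} (hα : α ∈ C.Φ) : C.s (-α) = C.s α := by
  refine LinearEquiv.toLinearMap_injective (LinearMap.ext fun v => ?_)
  show C.s (-α) v = C.s α v
  rw [C.s_apply'' (C.neg_root_mem hα), C.s_apply'' hα]
  have : pairing v (-α) = -pairing v α := by
    unfold pairing
    rw [inner_neg_neg, inner_neg_right]
    ring_nf
  rw [this]
  module

@[simp] lemma wordProd_nil : C.wordProd [] = 1 := rfl

lemma wordProd_cons (i : Fin C.r) (l : List (Fin C.r)) :
    C.wordProd (i :: l) = C.s (C.π i) * C.wordProd l := by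
  unfold wordProd
  rw [List.map_cons, List.prod_cons]

lemma wordProd_append (l₁ l₂ : List (Fin C.r)) :
    C.wordProd (l₁ ++ l₂) = C.wordProd l₁ * C.wordProd l₂ := by
  unfold wordProd
  rw [List.map_append, List.prod_append]

lemma wordProd_concat (l : List (Fin C.r)) (i : Fin C.r) :
    C.wordProd (l ++ [i]) = C.wordProd l * C.s (C.π i) := by
  have h1 : C.wordProd [i] = C.s (C.π i) := by unfold wordProd; simp
  rw [C.wordProd_append, h1]

lemma wordProd_mem (l : List (Fin C.r)) : C.wordProd l ∈ C.W := by
  induction l with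
  | nil => simpa using C.W.one_mem
  | cons i t ih =>
    rw [C.wordProd_cons]
    exact C.W.mul_mem (C.s_mem (C.simple_mem i)) ih

lemma wordProd_reverse (l : List (Fin C.r)) :
    C.wordProd l.reverse = (C.wordProd l)⁻¹ := by
  induction l with
  | nil => simp
  | cons i t ih =>
    rw [List.reverse_cons, C.wordProd_concat, ih, C.wordProd_cons, mul_inv_rev,
      C.s_inv (C.simple_mem i)]

lemma obtuse {i k : Fin C.r} (h : k ≠ i) : pairing (C.π k) (C.π i) ≤ 0 := by
  set p := pairing (C.π k) (C.π i) with hp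
  have hβ : C.s (C.π i) (C.π k) ∈ C.Φ := C.refl_stable _ (C.simple_mem i) _ (C.simple_mem k)
  rw [C.s_apply'' (C.simple_mem i)] at hβ
  rcases C.root_dichotomy hβ with hNN | hNP
  · have := hNN i
    rw [C.cf_sub, C.cf_smul, C.cf_simple, C.cf_simple, if_neg h, if_pos rfl] at this
    linarith
  · have := hNP k
    rw [C.cf_sub, C.cf_smul, C.cf_simple, C.cf_simple, if_pos rfl, if_neg (Ne.symm h)] at this
    linarith

lemma s_simple_NN {m : Fin C.r} {β : V} (hβ : β ∈ C.Φ) (hNN : C.NN β) (hne : β ≠ C.π m) :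
    C.NN (C.s (C.π m) β) := by
  have hk : ∃ k, k ≠ m ∧ 0 < C.cf β k := by
    by_contra hcon
    push_neg at hcon
    have hzero : ∀ k, k ≠ m → C.cf β k = 0 := fun k hk =>
      le_antisymm (by simpa [hk] using hcon k) (hNN k)
    have hβm : β = C.cf β m • C.π m := by
      conv_lhs => rw [C.cf_eq β]
      rw [Finset.sum_eq_single m]
      · intro b _ hb; rw [hzero b hb, zero_smul]
      · intro hb; exact absurd (Finset.mem_univ m) hb
    rcases C.reduced (C.π m) (C.simple_mem m) (C.cf β m) (hβm ▸ hβ) with h1 | h1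
    · exact hne (by rw [hβm, h1, one_smul])
    · have := hNN m; rw [h1] at this; linarith
  obtain ⟨k, hkm, hk⟩ := hk
  have hsβ : C.s (C.π m) β ∈ C.Φ := C.refl_stable _ (C.simple_mem m) _ hβ
  refine C.root_NN_of_not_NP hsβ fun hNP => ?_
  have := hNP k
  rw [C.s_apply'' (C.simple_mem m)] at this
  simp [Ne.symm hkm] at this
  linarith

lemma eq_simple_of_NP {m : Fin C.r} {β : V} (hβ : β ∈ C.Φ) (hNN : C.NN β)
    (h : C.NP (C.s (C.π m) β)) : β = C.π m := by
  by_contra hne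
  exact C.root_not_both (C.refl_stable _ (C.simple_mem m) _ hβ)
    ⟨C.s_simple_NN hβ hNN hne, h⟩

lemma exists_word_of_pos_root : ∀ α ∈ C.Φ, C.NN α →
    ∃ (l : List (Fin C.r)) (i : Fin C.r), C.wordProd l (C.π i) = α := by
  set T := C.Φ.filter
    (fun α => C.NN α ∧ ¬∃ (l : List (Fin C.r)) (i : Fin C.r), C.wordProd l (C.π i) = α) with hT
  rcases T.eq_empty_or_nonempty with hemp | hne
  · intro α hα hNN
    by_contra hcon
    have : α ∈ T := by rw [hT]; exact Finset.mem_filter.2 ⟨hα, hNN, hcon⟩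
    rw [hemp] at this
    exact absurd this (Finset.notMem_empty α)
  · exfalso
    obtain ⟨α, hαT, hmin⟩ := T.exists_min_image (fun v => ∑ i, C.cf v i) hne
    obtain ⟨hαΦ, hNN, hno⟩ := Finset.mem_filter.1 hαT
    have hαsimple : ∀ i, α ≠ C.π i := by
      intro i h
      exact hno ⟨[], i, by simp [h]⟩
    have hip : ∃ i, 0 < C.cf α i ∧ 0 < ⟪α, C.π i⟫_ℝ := by
      by_contra hcon
      push_neg at hcon
      have hterm : ∀ i, C.cf α i * ⟪α, C.π i⟫_ℝ ≤ 0 := by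
        intro i
        rcases lt_or_ge 0 (C.cf α i) with h1 | h1
        · exact mul_nonpos_of_nonneg_of_nonpos (le_of_lt h1) (hcon i h1)
        · have : C.cf α i = 0 := le_antisymm (by linarith) (hNN i)
          rw [this, zero_mul]
      have h2 : ⟪α, α⟫_ℝ = ∑ i, C.cf α i * ⟪α, C.π i⟫_ℝ := by
        calc ⟪α, α⟫_ℝ = ⟪α, ∑ i, C.cf α i • C.π i⟫_ℝ := by rw [← C.cf_eq α]
          _ = ∑ i, C.cf α i * ⟪α, C.π i⟫_ℝ := by
              rw [inner_sum]
              exact Finset.sum_congr rfl fun i _ => real_inner_smul_right _ _ _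
      have : ⟪α, α⟫_ℝ ≤ 0 := h2 ▸ Finset.sum_nonpos fun i _ => hterm i
      linarith [C.root_inner_pos hαΦ]
    obtain ⟨i, hci, hii⟩ := hip
    have hp : 0 < pairing α (C.π i) :=
      div_pos (by linarith) (C.root_inner_pos (C.simple_mem i))
    set β := C.s (C.π i) α with hβdef
    have hβΦ : β ∈ C.Φ := C.refl_stable _ (C.simple_mem i) _ hαΦ
    have hβNN : C.NN β := C.s_simple_NN hαΦ hNN (hαsimple i)
    have hβT : β ∈ T := by
      rw [hT]
      refine Finset.mem_filter.2 ⟨hβΦ, hβNN, fun ⟨l, i', hw⟩ => ?_⟩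
      refine hno ⟨i :: l, i', ?_⟩
      rw [C.wordProd_cons, mul_apply', hw, hβdef, C.s_s (C.simple_mem i)]
    have hlt : ∑ m, C.cf β m < ∑ m, C.cf α m := by
      have : ∀ m, C.cf β m = C.cf α m - pairing α (C.π i) * (if i = m then 1 else 0) := by
        intro m
        rw [hβdef, C.s_apply'' (C.simple_mem i), C.cf_sub, C.cf_smul, C.cf_simple]
      rw [Finset.sum_congr rfl fun m _ => this m, Finset.sum_sub_distrib]
      simp [Finset.sum_ite_eq, hp]
    exact absurd (hmin β hβT) (by linarith)

lemma exists_word_s {α : V} (hα : α ∈ C.Φ) : ∃ l, C.wordProd l = C.s α := by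
  have key : ∀ β ∈ C.Φ, C.NN β → ∃ l, C.wordProd l = C.s β := by
    intro β hβ hNN
    obtain ⟨l, i, hw⟩ := C.exists_word_of_pos_root β hβ hNN
    refine ⟨l ++ i :: l.reverse, ?_⟩
    rw [show l ++ i :: l.reverse = (l ++ [i]) ++ l.reverse by simp, C.wordProd_append,
      C.wordProd_concat, C.wordProd_reverse, ← hw,
      C.conj_s (C.wordProd_mem l) (C.simple_mem i)]
  rcases C.root_dichotomy hα with hNN | hNP
  · exact key α hα hNN
  · obtain ⟨l, hl⟩ := key (-α) (C.neg_root_mem hα) (C.NN_neg_iff.2 hNP)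
    exact ⟨l, by rw [hl, C.s_neg hα]⟩

lemma exists_word {g : V ≃ₗ[ℝ] V} (hg : g ∈ C.W) : ∃ l, C.wordProd l = g := by
  rw [C.W_eq] at hg
  induction hg using Subgroup.closure_induction with
  | mem x hx =>
    obtain ⟨α, hα, rfl⟩ := hx
    exact C.exists_word_s hα
  | one => exact ⟨[], rfl⟩
  | mul x y _ _ ihx ihy =>
    obtain ⟨l₁, hl₁⟩ := ihx
    obtain ⟨l₂, hl₂⟩ := ihy
    exact ⟨l₁ ++ l₂, by rw [C.wordProd_append, hl₁, hl₂]⟩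
  | inv x _ ihx =>
    obtain ⟨l, hl⟩ := ihx
    exact ⟨l.reverse, by rw [C.wordProd_reverse, hl]⟩

lemma length_le_of_word (l : List (Fin C.r)) {g : V ≃ₗ[ℝ] V} (h : C.wordProd l = g) :
    C.length g ≤ l.length := Nat.sInf_le ⟨l, rfl, h⟩

lemma exists_reduced {g : V ≃ₗ[ℝ] V} (hg : g ∈ C.W) :
    ∃ l, l.length = C.length g ∧ C.wordProd l = g := by
  obtain ⟨l, hl⟩ := C.exists_word hg
  have hne : {n | ∃ l : List (Fin C.r), l.length = n ∧ C.wordProd l = g}.Nonempty :=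
    ⟨l.length, l, rfl, hl⟩
  exact Nat.sInf_mem hne

@[simp] lemma length_one : C.length 1 = 0 :=
  le_antisymm (C.length_le_of_word [] rfl) (Nat.zero_le _)

lemma eq_one_of_length_zero {g : V ≃ₗ[ℝ] V} (hg : g ∈ C.W) (h : C.length g = 0) : g = 1 := by
  obtain ⟨l, hl, hw⟩ := C.exists_reduced hg
  rw [h, List.length_eq_zero_iff] at hl
  rw [← hw, hl, C.wordProd_nil]

lemma length_inv {g : V ≃ₗ[ℝ] V} (hg : g ∈ C.W) : C.length g⁻¹ = C.length g := by
  have key : ∀ h ∈ C.W, C.length h⁻¹ ≤ C.length h := by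
    intro h hh
    obtain ⟨l, hl, hw⟩ := C.exists_reduced hh
    calc C.length h⁻¹ ≤ l.reverse.length :=
          C.length_le_of_word _ (by rw [C.wordProd_reverse, hw])
      _ = C.length h := by rw [List.length_reverse, hl]
  refine le_antisymm (key g hg) ?_
  have := key g⁻¹ (C.W.inv_mem hg)
  rwa [inv_inv] at this

lemma exchange : ∀ (l : List (Fin C.r)) (i : Fin C.r),
    C.NP (C.wordProd l (C.π i)) →
    ∃ l', l'.length + 1 = l.length ∧ C.wordProd l' = C.wordProd l * C.s (C.π i) := by
  intro l
  induction l with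
  | nil =>
    intro i h
    exfalso
    refine C.root_not_both (C.simple_mem i) ⟨fun k => ?_, by simpa using h⟩
    rw [C.cf_simple]
    split <;> norm_num
  | cons m t ih =>
    intro i h
    by_cases hu : C.NP (C.wordProd t (C.π i))
    · obtain ⟨t', ht', hw⟩ := ih i hu
      refine ⟨m :: t', by simpa using ht', ?_⟩
      rw [C.wordProd_cons, hw, C.wordProd_cons, mul_assoc]
    · have huΦ : C.wordProd t (C.π i) ∈ C.Φ :=
        C.W_maps_root (C.wordProd_mem t) (C.simple_mem i)
      have huNN : C.NN (C.wordProd t (C.π i)) := C.root_NN_of_not_NP huΦ hu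
      have heq : C.wordProd t (C.π i) = C.π m := by
        refine C.eq_simple_of_NP huΦ huNN ?_
        have : C.s (C.π m) (C.wordProd t (C.π i)) = C.wordProd (m :: t) (C.π i) := by
          rw [C.wordProd_cons, mul_apply']
        rw [this]
        exact h
      have hconj : C.wordProd t * C.s (C.π i) * (C.wordProd t)⁻¹ = C.s (C.π m) := by
        rw [C.conj_s (C.wordProd_mem t) (C.simple_mem i), heq]
      refine ⟨t, by simp, ?_⟩
      rw [C.wordProd_cons, ← hconj, mul_assoc (C.wordProd t * C.s (C.π i)),
        inv_mul_cancel, mul_one, mul_assoc, C.s_mul_self (C.simple_mem i), mul_one]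

lemma length_descent {g : V ≃ₗ[ℝ] V} (hg : g ∈ C.W) {i : Fin C.r}
    (h : C.NP (g (C.π i))) : C.length (g * C.s (C.π i)) < C.length g := by
  obtain ⟨l, hl, hw⟩ := C.exists_reduced hg
  obtain ⟨l', hl', hw'⟩ := C.exchange l i (by rw [hw]; exact h)
  calc C.length (g * C.s (C.π i)) ≤ l'.length := C.length_le_of_word l' (by rw [hw', hw])
    _ < l.length := by omega
    _ = C.length g := hl

lemma NP_neg_iff {v : V} : C.NP (-v) ↔ C.NN v := by
  rw [← C.NN_neg_iff, neg_neg]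

lemma length_ascent {g : V ≃ₗ[ℝ] V} (hg : g ∈ C.W) {i : Fin C.r}
    (h : C.NN (g (C.π i))) : C.length g < C.length (g * C.s (C.π i)) := by
  have hgs : g * C.s (C.π i) ∈ C.W := C.W.mul_mem hg (C.s_mem (C.simple_mem i))
  have hNP : C.NP ((g * C.s (C.π i)) (C.π i)) := by
    rw [mul_apply', C.s_self (C.simple_mem i), map_neg]
    exact C.NP_neg_iff.2 h
  have := C.length_descent hgs hNP
  rwa [mul_assoc, C.s_mul_self (C.simple_mem i), mul_one] at this

lemma length_mul_s_le {g : V ≃ₗ[ℝ] V} (hg : g ∈ C.W) (i : Fin C.r) :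
    C.length (g * C.s (C.π i)) ≤ C.length g + 1 := by
  obtain ⟨l, hl, hw⟩ := C.exists_reduced hg
  calc C.length (g * C.s (C.π i)) ≤ (l ++ [i]).length :=
        C.length_le_of_word _ (by rw [C.wordProd_concat, hw])
    _ = C.length g + 1 := by simp [hl]

end RootSystemData


namespace RootSystemData

variable {V : Type} [NormedAddCommGroup V] [InnerProductSpace ℝ V] [FiniteDimensional ℝ V]
variable (C : RootSystemData V)

/-- The positive roots. -/
def posRoots : Finset V := C.Φ.filter C.NN

/-- The inversion set of `g`. -/
def invSet (g : V ≃ₗ[ℝ] V) : Finset V := C.posRoots.filter (fun α => C.NP (g α))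

/-- The number of inversions of `g`. -/
def N (g : V ≃ₗ[ℝ] V) : ℕ := (C.invSet g).card

lemma mem_posRoots {α : V} : α ∈ C.posRoots ↔ α ∈ C.Φ ∧ C.NN α := Finset.mem_filter

lemma mem_invSet {g : V ≃ₗ[ℝ] V} {α : V} :
    α ∈ C.invSet g ↔ α ∈ C.Φ ∧ C.NN α ∧ C.NP (g α) := by
  unfold invSet
  rw [Finset.mem_filter, C.mem_posRoots, and_assoc]

lemma simple_mem_posRoots (i : Fin C.r) : C.π i ∈ C.posRoots := by
  refine C.mem_posRoots.2 ⟨C.simple_mem i, fun k => ?_⟩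
  rw [C.cf_simple]
  split <;> norm_num

lemma neg_simple_not_NN (i : Fin C.r) : ¬C.NN (-C.π i) := by
  intro h
  have := h i
  rw [C.cf_neg, C.cf_simple, if_pos rfl] at this
  linarith

lemma s_posRoots {i : Fin C.r} {α : V} (hα : α ∈ C.posRoots) (hne : α ≠ C.π i) :
    C.s (C.π i) α ∈ C.posRoots ∧ C.s (C.π i) α ≠ C.π i := by
  obtain ⟨hΦ, hNN⟩ := C.mem_posRoots.1 hα
  refine ⟨C.mem_posRoots.2 ⟨C.refl_stable _ (C.simple_mem i) _ hΦ,
    C.s_simple_NN hΦ hNN hne⟩, fun h => ?_⟩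
  have : α = -C.π i := by
    have := congrArg (C.s (C.π i)) h
    rw [C.s_s (C.simple_mem i), C.s_self (C.simple_mem i)] at this
    exact this
  exact C.neg_simple_not_NN i (this ▸ hNN)

lemma card_invSet_sdiff (g : V ≃ₗ[ℝ] V) (i : Fin C.r) :
    ((C.invSet (g * C.s (C.π i))) \ {C.π i}).card = ((C.invSet g) \ {C.π i}).card := by
  refine Finset.card_bij' (fun α _ => C.s (C.π i) α) (fun α _ => C.s (C.π i) α) ?_ ?_ ?_ ?_
  · intro α hα
    rw [Finset.mem_sdiff, C.mem_invSet] at hα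
    obtain ⟨⟨hΦ, hNN, hNP⟩, hne⟩ := hα
    rw [Finset.mem_sdiff, C.mem_invSet]
    have hmem := C.s_posRoots (C.mem_posRoots.2 ⟨hΦ, hNN⟩)
      (by simpa using hne)
    obtain ⟨hp, hne'⟩ := hmem
    obtain ⟨hΦ', hNN'⟩ := C.mem_posRoots.1 hp
    refine ⟨⟨hΦ', hNN', ?_⟩, by simpa using hne'⟩
    simpa using hNP
  · intro α hα
    rw [Finset.mem_sdiff, C.mem_invSet] at hα
    obtain ⟨⟨hΦ, hNN, hNP⟩, hne⟩ := hα
    rw [Finset.mem_sdiff, C.mem_invSet]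
    have hmem := C.s_posRoots (C.mem_posRoots.2 ⟨hΦ, hNN⟩) (by simpa using hne)
    obtain ⟨hp, hne'⟩ := hmem
    obtain ⟨hΦ', hNN'⟩ := C.mem_posRoots.1 hp
    refine ⟨⟨hΦ', hNN', ?_⟩, by simpa using hne'⟩
    show C.NP ((g * C.s (C.π i)) (C.s (C.π i) α))
    rwa [mul_apply', C.s_s (C.simple_mem i)]
  · intro α _; exact C.s_s (C.simple_mem i) α
  · intro α _; exact C.s_s (C.simple_mem i) α

lemma card_invSet_split (g : V ≃ₗ[ℝ] V) (i : Fin C.r) (hroot : g (C.π i) ∈ C.Φ) :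
    C.N g = ((C.invSet g) \ {C.π i}).card + (if C.NP (g (C.π i)) then 1 else 0) := by
  by_cases h : C.NP (g (C.π i))
  · rw [if_pos h]
    have hmem : C.π i ∈ C.invSet g := by
      rcases C.mem_posRoots.1 (C.simple_mem_posRoots i) with ⟨h1, h2⟩
      exact C.mem_invSet.2 ⟨h1, h2, h⟩
    have hsub : {C.π i} ⊆ C.invSet g := Finset.singleton_subset_iff.2 hmem
    rw [Finset.card_sdiff_of_subset hsub, Finset.card_singleton]
    have : 1 ≤ (C.invSet g).card := Finset.card_pos.2 ⟨_, hmem⟩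
    unfold N
    omega
  · rw [if_neg h, add_zero]
    have heq : C.invSet g \ {C.π i} = C.invSet g := by
      ext β
      rw [Finset.mem_sdiff, Finset.mem_singleton]
      exact ⟨fun hb => hb.1, fun hb => ⟨hb, fun he => h (he ▸ (C.mem_invSet.1 hb).2.2)⟩⟩
    rw [heq]
    rfl

lemma N_ascent {g : V ≃ₗ[ℝ] V} {i : Fin C.r} (hroot : g (C.π i) ∈ C.Φ)
    (hNN : C.NN (g (C.π i))) : C.N (g * C.s (C.π i)) = C.N g + 1 := by
  have hroot' : (g * C.s (C.π i)) (C.π i) ∈ C.Φ := by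
    rw [mul_apply', C.s_self (C.simple_mem i), map_neg]
    exact C.neg_root_mem hroot
  rw [C.card_invSet_split (g * C.s (C.π i)) i hroot', C.card_invSet_split g i hroot,
    C.card_invSet_sdiff g i]
  have h1 : C.NP ((g * C.s (C.π i)) (C.π i)) := by
    rw [mul_apply', C.s_self (C.simple_mem i), map_neg]
    exact C.NP_neg_iff.2 hNN
  have h2 : ¬C.NP (g (C.π i)) := fun h => C.root_not_both hroot ⟨hNN, h⟩
  rw [if_pos h1, if_neg h2]

lemma N_descent {g : V ≃ₗ[ℝ] V} {i : Fin C.r} (hroot : g (C.π i) ∈ C.Φ)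
    (hNP : C.NP (g (C.π i))) : C.N (g * C.s (C.π i)) + 1 = C.N g := by
  have hroot' : (g * C.s (C.π i)) (C.π i) ∈ C.Φ := by
    rw [mul_apply', C.s_self (C.simple_mem i), map_neg]
    exact C.neg_root_mem hroot
  rw [C.card_invSet_split (g * C.s (C.π i)) i hroot', C.card_invSet_split g i hroot,
    C.card_invSet_sdiff g i]
  have h1 : ¬C.NP ((g * C.s (C.π i)) (C.π i)) := by
    rw [mul_apply', C.s_self (C.simple_mem i), map_neg]
    intro h
    exact C.root_not_both (C.neg_root_mem hroot) ⟨C.NN_neg_iff.2 hNP, h⟩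
  rw [if_neg h1, if_pos hNP]

lemma N_one : C.N 1 = 0 := by
  unfold N
  rw [Finset.card_eq_zero]
  ext α
  simp only [Finset.notMem_empty, iff_false]
  intro h
  obtain ⟨hΦ, hNN, hNP⟩ := C.mem_invSet.1 h
  exact C.root_not_both hΦ ⟨hNN, by simpa using hNP⟩

end RootSystemData

namespace RootSystemData

variable {V : Type} [NormedAddCommGroup V] [InnerProductSpace ℝ V] [FiniteDimensional ℝ V]
variable (C : RootSystemData V)

lemma N_le_length_word : ∀ l : List (Fin C.r), C.N (C.wordProd l) ≤ l.length := by
  intro l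
  induction l using List.reverseRecOn with
  | nil => simp [C.N_one]
  | append_singleton t i ih =>
    rw [C.wordProd_concat]
    have hroot : C.wordProd t (C.π i) ∈ C.Φ :=
      C.W_maps_root (C.wordProd_mem t) (C.simple_mem i)
    rcases C.root_dichotomy hroot with hNN | hNP
    · rw [C.N_ascent hroot hNN]
      simpa using ih
    · have := C.N_descent hroot hNP
      simp only [List.length_append, List.length_singleton]
      omega

lemma N_le_length {g : V ≃ₗ[ℝ] V} (hg : g ∈ C.W) : C.N g ≤ C.length g := by
  obtain ⟨l, hl, hw⟩ := C.exists_reduced hg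
  rw [← hl, ← hw]
  exact C.N_le_length_word l

lemma length_le_N {g : V ≃ₗ[ℝ] V} (hg : g ∈ C.W) : C.length g ≤ C.N g := by
  have key : ∀ n, ∀ g ∈ C.W, C.length g = n → C.length g ≤ C.N g := by
    intro n
    induction n using Nat.strong_induction_on with
    | _ n ih =>
      intro g hg hlen
      rcases Nat.eq_zero_or_pos n with h0 | hpos
      · rw [hlen, h0]; exact Nat.zero_le _
      obtain ⟨l, hl, hw⟩ := C.exists_reduced hg
      have hlne : l ≠ [] := by
        intro h
        rw [h] at hl
        simp at hl
        omega
      obtain ⟨t, i, rfl⟩ := List.eq_nil_or_concat l |>.resolve_left hlne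
      rw [List.concat_eq_append] at hl hw
      set y := C.wordProd t with hy
      have hymem : y ∈ C.W := C.wordProd_mem t
      have hglen : C.length g = n := hlen
      have hyg : y * C.s (C.π i) = g := by rw [hy, ← C.wordProd_concat, hw]
      have hylen : C.length y ≤ n - 1 := by
        have := C.length_le_of_word t rfl
        rw [← hy] at this
        have hlength : (t ++ [i]).length = n := by rw [hl, hlen]
        simp at hlength
        omega
      have hroot : y (C.π i) ∈ C.Φ := C.W_maps_root hymem (C.simple_mem i)
      have hNN : C.NN (y (C.π i)) := by
        refine C.root_NN_of_not_NP hroot fun hNP => ?_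
        have := C.length_descent hymem hNP
        rw [hyg, hglen] at this
        omega
      have hN : C.N g = C.N y + 1 := by rw [← hyg]; exact C.N_ascent hroot hNN
      have hylt : C.length y < n := by omega
      have := ih (C.length y) (by omega) y hymem rfl
      have hgley : C.length g ≤ C.length y + 1 := by
        rw [← hyg]
        exact C.length_mul_s_le hymem i
      omega
  exact key (C.length g) g hg rfl

lemma length_eq_N {g : V ≃ₗ[ℝ] V} (hg : g ∈ C.W) : C.length g = C.N g :=
  le_antisymm (C.length_le_N hg) (C.N_le_length hg)

/-! ### Parabolic subgroups -/

lemma s_mem_parabolic {J : Set (Fin C.r)} {i : Fin C.r} (hi : i ∈ J) :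
    C.s (C.π i) ∈ C.parabolicSubgroup J :=
  Subgroup.subset_closure ⟨i, hi, rfl⟩

lemma parabolic_word {J : Set (Fin C.r)} {g : V ≃ₗ[ℝ] V} (hg : g ∈ C.parabolicSubgroup J) :
    ∃ l : List (Fin C.r), (∀ k ∈ l, k ∈ J) ∧ C.wordProd l = g := by
  induction hg using Subgroup.closure_induction with
  | mem x hx =>
    obtain ⟨i, hi, rfl⟩ := hx
    refine ⟨[i], by simpa using hi, ?_⟩
    rw [C.wordProd_cons, C.wordProd_nil, mul_one]
  | one => exact ⟨[], by simp, rfl⟩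
  | mul x y _ _ ihx ihy =>
    obtain ⟨l₁, h₁, hw₁⟩ := ihx
    obtain ⟨l₂, h₂, hw₂⟩ := ihy
    refine ⟨l₁ ++ l₂, ?_, by rw [C.wordProd_append, hw₁, hw₂]⟩
    intro k hk
    rcases List.mem_append.1 hk with h | h
    · exact h₁ k h
    · exact h₂ k h
  | inv x _ ihx =>
    obtain ⟨l, h, hw⟩ := ihx
    refine ⟨l.reverse, fun k hk => h k (List.mem_reverse.1 hk), ?_⟩
    rw [C.wordProd_reverse, hw]

lemma wordProd_cf {J : Set (Fin C.r)} :
    ∀ l : List (Fin C.r), (∀ k ∈ l, k ∈ J) → ∀ v : V, ∀ m ∉ J,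
      C.cf (C.wordProd l v) m = C.cf v m := by
  intro l
  induction l with
  | nil => intro _ v m _; simp
  | cons k t ih =>
    intro hl v m hm
    have hk : k ∈ J := hl k List.mem_cons_self
    have hkm : k ≠ m := fun h => hm (h ▸ hk)
    rw [C.wordProd_cons, mul_apply',
      C.s_apply'' (C.simple_mem k), C.cf_sub, C.cf_smul, C.cf_simple, if_neg hkm,
      ih (fun k' hk' => hl k' (List.mem_cons_of_mem k hk')) v m hm]
    ring

lemma parabolic_cf {J : Set (Fin C.r)} {g : V ≃ₗ[ℝ] V} (hg : g ∈ C.parabolicSubgroup J)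
    (v : V) {m : Fin C.r} (hm : m ∉ J) : C.cf (g v) m = C.cf v m := by
  obtain ⟨l, hl, rfl⟩ := C.parabolic_word hg
  exact C.wordProd_cf l hl v m hm

/-- “Supported on `J`”. -/
def suppJ (J : Set (Fin C.r)) (v : V) : Prop := ∀ m ∉ J, C.cf v m = 0

lemma suppJ_of_parabolic_NP {J : Set (Fin C.r)} {g : V ≃ₗ[ℝ] V}
    (hg : g ∈ C.parabolicSubgroup J) {α : V} (hNN : C.NN α) (hNP : C.NP (g α)) :
    C.suppJ J α := by
  intro m hm
  have := C.parabolic_cf hg α hm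
  have h1 := hNP m
  rw [this] at h1
  exact le_antisymm h1 (hNN m)

lemma NN_apply_of_suppJ {J : Set (Fin C.r)} {w : V ≃ₗ[ℝ] V}
    (hW : ∀ i ∈ J, C.NN (w (C.π i))) {α : V} (hNN : C.NN α) (hsupp : C.suppJ J α) :
    C.NN (w α) :=
  C.NN_apply_of_support w J hNN hsupp hW

lemma NN_apply_of_not_suppJ {J : Set (Fin C.r)} {g : V ≃ₗ[ℝ] V}
    (hgJ : g ∈ C.parabolicSubgroup J) (hgW : g ∈ C.W) {α : V} (hα : α ∈ C.Φ)
    (hNN : C.NN α) (hnsupp : ¬C.suppJ J α) : C.NN (g α) := by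
  obtain ⟨m, hm, hc⟩ := by
    unfold suppJ at hnsupp
    push_neg at hnsupp
    exact hnsupp
  refine C.root_NN_of_not_NP (C.W_maps_root hgW hα) fun hNP => ?_
  have := hNP m
  rw [C.parabolic_cf hgJ α hm] at this
  exact hc (le_antisymm this (hNN m))

lemma invSet_subset_parabolic {J : Set (Fin C.r)} {w u : V ≃ₗ[ℝ] V} (hw : w ∈ C.W)
    (hW : ∀ i ∈ J, C.NN (w (C.π i))) (hu : u ∈ C.parabolicSubgroup J) (huW : u ∈ C.W) :
    C.invSet u ⊆ C.invSet (w * u) := by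
  intro α hα
  obtain ⟨hΦ, hNN, hNP⟩ := C.mem_invSet.1 hα
  have huα : u α ∈ C.Φ := C.W_maps_root huW hΦ
  have hsupp : C.suppJ J (-(u α)) := by
    intro m hm
    rw [C.cf_neg, C.parabolic_cf hu α hm, C.suppJ_of_parabolic_NP hu hNN hNP m hm, neg_zero]
  have hNN' : C.NN (w (-(u α))) :=
    C.NN_apply_of_suppJ hW (C.NN_neg_iff.2 hNP) hsupp
  refine C.mem_invSet.2 ⟨hΦ, hNN, ?_⟩
  intro m
  rw [mul_apply']
  have := hNN' m
  rw [map_neg, C.cf_neg] at this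
  linarith

lemma N_add {J : Set (Fin C.r)} {w u : V ≃ₗ[ℝ] V} (hw : w ∈ C.W)
    (hW : ∀ i ∈ J, C.NN (w (C.π i))) (hu : u ∈ C.parabolicSubgroup J) :
    C.N (w * u) = C.N w + C.N u := by
  have huW : u ∈ C.W := C.parabolic_le J hu
  have hsub := C.invSet_subset_parabolic hw hW hu huW
  have hcard : (C.invSet (w * u)).card =
      (C.invSet (w * u) \ C.invSet u).card + (C.invSet u).card := by
    rw [Finset.card_sdiff_add_card_eq_card hsub]
  have hbij : (C.invSet (w * u) \ C.invSet u).card = (C.invSet w).card := by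
    refine Finset.card_bij' (fun α _ => u α) (fun β _ => u⁻¹ β) ?_ ?_ ?_ ?_
    · intro α hα
      rw [Finset.mem_sdiff] at hα
      obtain ⟨hin, hout⟩ := hα
      obtain ⟨hΦ, hNN, hNP⟩ := C.mem_invSet.1 hin
      have huα : u α ∈ C.Φ := C.W_maps_root huW hΦ
      have hNNuα : C.NN (u α) := by
        refine C.root_NN_of_not_NP huα fun h => ?_
        exact hout (C.mem_invSet.2 ⟨hΦ, hNN, h⟩)
      refine C.mem_invSet.2 ⟨huα, hNNuα, ?_⟩
      intro m
      have := hNP m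
      rwa [mul_apply'] at this
    · intro β hβ
      obtain ⟨hΦ, hNN, hNP⟩ := C.mem_invSet.1 hβ
      have hβnsupp : ¬C.suppJ J β := by
        intro hsupp
        have : C.NN (w β) := C.NN_apply_of_suppJ hW hNN hsupp
        exact C.root_not_both (C.W_maps_root hw hΦ) ⟨this, hNP⟩
      have huinv : u⁻¹ ∈ C.parabolicSubgroup J := (C.parabolicSubgroup J).inv_mem hu
      have huWinv : u⁻¹ ∈ C.W := C.W.inv_mem huW
      have hinvΦ : u⁻¹ β ∈ C.Φ := C.W_maps_root huWinv hΦ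
      have hinvNN : C.NN (u⁻¹ β) := C.NN_apply_of_not_suppJ huinv huWinv hΦ hNN hβnsupp
      rw [Finset.mem_sdiff]
      constructor
      · refine C.mem_invSet.2 ⟨hinvΦ, hinvNN, ?_⟩
        intro m
        rw [mul_apply', apply_inv_self']
        exact hNP m
      · intro hmem
        obtain ⟨_, _, hNP'⟩ := C.mem_invSet.1 hmem
        rw [apply_inv_self'] at hNP'
        exact C.root_not_both hΦ ⟨hNN, hNP'⟩
    · intro α _; exact inv_apply_self' u α
    · intro β _; exact apply_inv_self' u β
  unfold N
  rw [hcard, hbij, add_comm]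

lemma length_add {J : Set (Fin C.r)} {w u : V ≃ₗ[ℝ] V} (hw : w ∈ C.W)
    (hW : ∀ i ∈ J, C.NN (w (C.π i))) (hu : u ∈ C.parabolicSubgroup J) :
    C.length (w * u) = C.length w + C.length u := by
  have huW : u ∈ C.W := C.parabolic_le J hu
  rw [C.length_eq_N (C.W.mul_mem hw huW), C.length_eq_N hw, C.length_eq_N huW,
    C.N_add hw hW hu]

lemma bruhat_chain {J : Set (Fin C.r)} {w : V ≃ₗ[ℝ] V} (hw : w ∈ C.W)
    (hW : ∀ i ∈ J, C.NN (w (C.π i))) :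
    ∀ u ∈ C.parabolicSubgroup J, C.BruhatLE w (w * u) := by
  have key : ∀ n, ∀ u ∈ C.parabolicSubgroup J, C.length u = n → C.BruhatLE w (w * u) := by
    intro n
    induction n using Nat.strong_induction_on with
    | _ n ih =>
      intro u hu hlen
      have huW : u ∈ C.W := C.parabolic_le J hu
      rcases Nat.eq_zero_or_pos n with h0 | hpos
      · have : u = 1 := C.eq_one_of_length_zero huW (by rw [hlen, h0])
        rw [this, mul_one]
        exact Relation.ReflTransGen.refl
      · have hNpos : 0 < C.N u := by
          rw [← C.length_eq_N huW, hlen]; exact hpos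
        obtain ⟨α, hα⟩ := Finset.card_pos.1 hNpos
        obtain ⟨hΦ, hNN, hNP⟩ := C.mem_invSet.1 hα
        have hsupp : C.suppJ J α := C.suppJ_of_parabolic_NP hu hNN hNP
        have hks : ∃ k ∈ J, C.NP (u (C.π k)) := by
          by_contra hcon
          push_neg at hcon
          have hNNk : ∀ k ∈ J, C.NN (u (C.π k)) := fun k hk =>
            C.root_NN_of_not_NP (C.W_maps_root huW (C.simple_mem k)) (hcon k hk)
          have : C.NN (u α) := C.NN_apply_of_suppJ hNNk hNN hsupp
          exact C.root_not_both (C.W_maps_root huW hΦ) ⟨this, hNP⟩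
        obtain ⟨k, hk, hNPk⟩ := hks
        set u₂ := u * C.s (C.π k) with hu₂
        have hu₂J : u₂ ∈ C.parabolicSubgroup J :=
          (C.parabolicSubgroup J).mul_mem hu (C.s_mem_parabolic hk)
        have hu₂W : u₂ ∈ C.W := C.parabolic_le J hu₂J
        have hlt : C.length u₂ < C.length u := C.length_descent huW hNPk
        have hstep : u₂ * C.s (C.π k) = u := by
          rw [hu₂, mul_assoc, C.s_mul_self (C.simple_mem k), mul_one]
        have hbru : C.BruhatLE w (w * u₂) := ih (C.length u₂) (by omega) u₂ hu₂J rfl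
        refine Relation.ReflTransGen.tail hbru ⟨⟨C.π k, C.simple_mem k, ?_⟩, ?_⟩
        · rw [mul_assoc, hstep]
        · rw [C.length_add hw hW hu, C.length_add hw hW hu₂J]
          omega
  exact fun u hu => key (C.length u) u hu rfl

end RootSystemData

namespace RootSystemData

variable {V : Type} [NormedAddCommGroup V] [InnerProductSpace ℝ V] [FiniteDimensional ℝ V]
variable (C : RootSystemData V)

lemma inner_simple_nonneg {a : V} (hdom : C.IsDominant a) (i : Fin C.r) :
    0 ≤ ⟪a, C.π i⟫_ℝ := by
  by_contra h
  push_neg at h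
  have h2 := hdom i
  unfold pairing at h2
  have : 2 * ⟪a, C.π i⟫_ℝ / ⟪C.π i, C.π i⟫_ℝ < 0 :=
    div_neg_of_neg_of_pos (by linarith) (C.root_inner_pos (C.simple_mem i))
  linarith

lemma inner_dom_NN {a x : V} (hdom : C.IsDominant a) (hx : C.NN x) : 0 ≤ ⟪a, x⟫_ℝ := by
  have : ⟪a, x⟫_ℝ = ∑ i, C.cf x i * ⟪a, C.π i⟫_ℝ := by
    calc ⟪a, x⟫_ℝ = ⟪a, ∑ i, C.cf x i • C.π i⟫_ℝ := by rw [← C.cf_eq x]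
      _ = ∑ i, C.cf x i * ⟪a, C.π i⟫_ℝ := by
          rw [inner_sum]
          exact Finset.sum_congr rfl fun i _ => real_inner_smul_right _ _ _
  rw [this]
  exact Finset.sum_nonneg fun i _ =>
    mul_nonneg (hx i) (C.inner_simple_nonneg hdom i)

lemma inner_dom_NP {a x : V} (hdom : C.IsDominant a) (hx : C.NP x) : ⟪a, x⟫_ℝ ≤ 0 := by
  have := C.inner_dom_NN hdom (C.NN_neg_iff.2 hx)
  rw [inner_neg_right] at this
  linarith

lemma dominant_orbit {b : V} (hdom : C.IsDominant b) : ∀ u ∈ C.W, C.NN (b - u b) := by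
  have key : ∀ n, ∀ u ∈ C.W, C.length u = n → C.NN (b - u b) := by
    intro n
    induction n using Nat.strong_induction_on with
    | _ n ih =>
      intro u hu hlen
      rcases Nat.eq_zero_or_pos n with h0 | hpos
      · have : u = 1 := C.eq_one_of_length_zero hu (by rw [hlen, h0])
        rw [this]
        intro m
        simp
      obtain ⟨l, hl, hw⟩ := C.exists_reduced hu
      have hlne : l ≠ [] := by
        intro h
        rw [h] at hl
        simp at hl
        omega
      obtain ⟨t, i, rfl⟩ := List.eq_nil_or_concat l |>.resolve_left hlne
      rw [List.concat_eq_append] at hl hw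
      set y := C.wordProd t with hy
      have hymem : y ∈ C.W := C.wordProd_mem t
      have hyu : y * C.s (C.π i) = u := by rw [hy, ← C.wordProd_concat, hw]
      have hylen : C.length y ≤ n - 1 := by
        have h1 := C.length_le_of_word t (rfl : C.wordProd t = _)
        have h2 : (t ++ [i]).length = n := by rw [hl, hlen]
        simp at h2
        rw [← hy] at h1
        omega
      have hNNy : C.NN (y (C.π i)) := by
        refine C.root_NN_of_not_NP (C.W_maps_root hymem (C.simple_mem i)) fun hNP => ?_
        have := C.length_descent hymem hNP
        rw [hyu, hlen] at this
        omega
      set p := pairing b (C.π i) with hp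
      have hub : u b = y b - p • (y (C.π i)) := by
        rw [← hyu, mul_apply', C.s_apply'' (C.simple_mem i), map_sub, map_smul, hp]
      have hIH : C.NN (b - y b) := ih (C.length y) (by omega) y hymem rfl
      intro m
      have heq : b - u b = (b - y b) + p • (y (C.π i)) := by
        rw [hub]
        abel
      rw [heq, C.cf_add, C.cf_smul]
      have hp0 : 0 ≤ p := hdom i
      exact add_nonneg (hIH m) (mul_nonneg hp0 (hNNy m))
  exact fun u hu => key (C.length u) u hu rfl

lemma NP_inv_of_left_descent {u : V ≃ₗ[ℝ] V} (hu : u ∈ C.W) {i : Fin C.r}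
    (h : C.length (C.s (C.π i) * u) < C.length u) : C.NP (u⁻¹ (C.π i)) := by
  have huinv : u⁻¹ ∈ C.W := C.W.inv_mem hu
  refine C.root_NP_of_not_NN (C.W_maps_root huinv (C.simple_mem i)) fun hNN => ?_
  have hasc := C.length_ascent huinv hNN
  have heq : (u⁻¹ * C.s (C.π i))⁻¹ = C.s (C.π i) * u := by
    rw [mul_inv_rev, inv_inv, C.s_inv (C.simple_mem i)]
  have h1 : C.length (u⁻¹ * C.s (C.π i)) = C.length (C.s (C.π i) * u) := by
    rw [← C.length_inv (C.W.mul_mem huinv (C.s_mem (C.simple_mem i))), heq]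
  rw [h1, C.length_inv hu] at hasc
  omega

lemma pairing_sub_left (a b c : V) : pairing (a - b) c = pairing a c - pairing b c := by
  unfold pairing
  rw [inner_sub_left]
  ring

lemma parabolic_orbit {lam : V} (hdom : C.IsDominant lam) (J : Set (Fin C.r)) :
    ∀ u ∈ C.W, C.suppJ J (lam - u lam) →
      ∃ u' ∈ C.parabolicSubgroup J, u' lam = u lam := by
  have key : ∀ n, ∀ u ∈ C.W, C.length u = n → C.suppJ J (lam - u lam) →
      ∃ u' ∈ C.parabolicSubgroup J, u' lam = u lam := by
    intro n
    induction n using Nat.strong_induction_on with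
    | _ n ih =>
      intro u hu hlen hsupp
      rcases Nat.eq_zero_or_pos n with h0 | hpos
      · have : u = 1 := C.eq_one_of_length_zero hu (by rw [hlen, h0])
        exact ⟨1, (C.parabolicSubgroup J).one_mem, by rw [this]⟩
      obtain ⟨l, hl, hw⟩ := C.exists_reduced hu
      have hlne : l ≠ [] := by
        intro h
        rw [h] at hl
        simp at hl
        omega
      obtain ⟨i, t, rfl⟩ := List.exists_cons_of_ne_nil hlne
      have hyu : C.s (C.π i) * C.wordProd t = u := by rw [← C.wordProd_cons, hw]
      set u₂ := C.s (C.π i) * u with hu₂def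
      have hu₂W : u₂ ∈ C.W := C.W.mul_mem (C.s_mem (C.simple_mem i)) hu
      have hu₂y : u₂ = C.wordProd t := by
        rw [hu₂def, ← hyu, ← mul_assoc, C.s_mul_self (C.simple_mem i), one_mul]
      have hlt : C.length u₂ < n := by
        have h1 := C.length_le_of_word t hu₂y.symm
        have h2 : (i :: t).length = n := by rw [hl, hlen]
        simp at h2
        omega
      have hNP : C.NP (u⁻¹ (C.π i)) :=
        C.NP_inv_of_left_descent hu (by rw [← hu₂def, hlen]; exact hlt)
      set q := pairing (u lam) (C.π i) with hq
      have hq1 : q ≤ 0 := by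
        have hqeq : q = pairing lam (u⁻¹ (C.π i)) := by
          rw [hq, ← C.pairing_map (C.W.inv_mem hu) (u lam) (C.π i), inv_apply_self']
        rw [hqeq]
        unfold pairing
        apply div_nonpos_of_nonpos_of_nonneg
        · have := C.inner_dom_NP hdom hNP
          linarith
        · exact real_inner_self_nonneg
      have hu₂lam : u₂ lam = u lam - q • C.π i := by
        rw [hu₂def, mul_apply', C.s_apply'' (C.simple_mem i), hq]
      by_cases hiJ : i ∈ J
      · have hsupp₂ : C.suppJ J (lam - u₂ lam) := by
          intro m hm
          have him : i ≠ m := fun h => hm (h ▸ hiJ)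
          have : lam - u₂ lam = (lam - u lam) + q • C.π i := by rw [hu₂lam]; abel
          rw [this, C.cf_add, C.cf_smul, C.cf_simple, if_neg him, hsupp m hm]
          ring
        obtain ⟨u', hu'J, hu'lam⟩ := ih (C.length u₂) hlt u₂ hu₂W rfl hsupp₂
        refine ⟨C.s (C.π i) * u', (C.parabolicSubgroup J).mul_mem
          (C.s_mem_parabolic hiJ) hu'J, ?_⟩
        rw [mul_apply', hu'lam, hu₂def, mul_apply', C.s_s (C.simple_mem i)]
      · have hq2 : 0 ≤ q := by
          have hNNd : C.NN (lam - u lam) := C.dominant_orbit hdom u hu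
          have hsplit : q = pairing lam (C.π i) - pairing (lam - u lam) (C.π i) := by
            rw [hq, pairing_sub_left]
            ring
          have hinn : ⟪lam - u lam, C.π i⟫_ℝ ≤ 0 := by
            have heq2 : ⟪lam - u lam, C.π i⟫_ℝ =
                ∑ k, C.cf (lam - u lam) k * ⟪C.π k, C.π i⟫_ℝ := by
              calc ⟪lam - u lam, C.π i⟫_ℝ
                  = ⟪∑ k, C.cf (lam - u lam) k • C.π k, C.π i⟫_ℝ := by
                    rw [← C.cf_eq (lam - u lam)]
                _ = ∑ k, C.cf (lam - u lam) k * ⟪C.π k, C.π i⟫_ℝ := by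
                    rw [sum_inner]
                    exact Finset.sum_congr rfl fun k _ => real_inner_smul_left _ _ _
            rw [heq2]
            refine Finset.sum_nonpos fun k _ => ?_
            by_cases hkJ : k ∈ J
            · have hki : k ≠ i := fun h => hiJ (h ▸ hkJ)
              refine mul_nonpos_of_nonneg_of_nonpos (hNNd k) ?_
              have hob := C.obtuse hki
              unfold pairing at hob
              by_contra hpos
              push_neg at hpos
              have : 0 < 2 * ⟪C.π k, C.π i⟫_ℝ / ⟪C.π i, C.π i⟫_ℝ :=
                div_pos (by linarith) (C.root_inner_pos (C.simple_mem i))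
              linarith
            · rw [hsupp k hkJ, zero_mul]
          have hpns : pairing (lam - u lam) (C.π i) ≤ 0 := by
            unfold pairing
            apply div_nonpos_of_nonpos_of_nonneg
            · linarith
            · exact real_inner_self_nonneg
          have := hdom i
          rw [hsplit]
          linarith
        have hq0 : q = 0 := le_antisymm hq1 hq2
        have hu₂lam' : u₂ lam = u lam := by rw [hu₂lam, hq0, zero_smul, sub_zero]
        obtain ⟨u', hu'J, hu'lam⟩ := ih (C.length u₂) hlt u₂ hu₂W rfl
          (by rw [hu₂lam']; exact hsupp)
        exact ⟨u', hu'J, by rw [hu'lam, hu₂lam']⟩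
  exact fun u hu hsupp => key (C.length u) u hu rfl hsupp

end RootSystemData

namespace RootSystemData

variable {V : Type} [NormedAddCommGroup V] [InnerProductSpace ℝ V] [FiniteDimensional ℝ V]
variable (C : RootSystemData V)

lemma N_le_card (g : V ≃ₗ[ℝ] V) : C.N g ≤ C.posRoots.card :=
  Finset.card_le_card (Finset.filter_subset _ _)

lemma NP_apply {g : V ≃ₗ[ℝ] V} (h : ∀ i, C.NP (g (C.π i))) {v : V} (hv : C.NN v) :
    C.NP (g v) := by
  intro m
  have : g v = ∑ i, C.cf v i • g (C.π i) := by
    conv_lhs => rw [C.cf_eq v]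
    rw [map_sum]
    simp
  rw [this, C.cf_finset_sum]
  refine Finset.sum_nonpos fun i _ => ?_
  rw [C.cf_smul]
  exact mul_nonpos_of_nonneg_of_nonpos (hv i) (h i m)

lemma exists_w0 : ∃ g ∈ C.W, ∀ i, C.NP (g (C.π i)) := by
  set S := {n | ∃ g ∈ C.W, C.N g = n} with hS
  have hbdd : BddAbove S := by
    refine ⟨C.posRoots.card, fun n hn => ?_⟩
    obtain ⟨g, _, rfl⟩ := hn
    exact C.N_le_card g
  have hne : S.Nonempty := ⟨C.N 1, 1, C.W.one_mem, rfl⟩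
  obtain ⟨g, hgW, hgN⟩ := Nat.sSup_mem hne hbdd
  refine ⟨g, hgW, fun i => ?_⟩
  refine C.root_NP_of_not_NN (C.W_maps_root hgW (C.simple_mem i)) fun hNN => ?_
  have hasc : C.N (g * C.s (C.π i)) = C.N g + 1 :=
    C.N_ascent (C.W_maps_root hgW (C.simple_mem i)) hNN
  have hmem : C.N g + 1 ∈ S :=
    ⟨g * C.s (C.π i), C.W.mul_mem hgW (C.s_mem (C.simple_mem i)), hasc⟩
  have := le_csSup hbdd hmem
  rw [hgN] at this
  omega

section W0

variable {w₀ : V ≃ₗ[ℝ] V} (hw₀W : w₀ ∈ C.W) (hw₀ : ∀ i, C.NP (w₀ (C.π i)))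

include hw₀W hw₀

lemma w0_invol : w₀ * w₀ = 1 := by
  have hN : C.N (w₀ * w₀) = 0 := by
    unfold N
    rw [Finset.card_eq_zero, Finset.eq_empty_iff_forall_notMem]
    intro α hα
    obtain ⟨hΦ, hNN, hNP⟩ := C.mem_invSet.1 hα
    have h1 : C.NP (w₀ α) := C.NP_apply hw₀ hNN
    have h2 : C.NN (-(w₀ α)) := C.NN_neg_iff.2 h1
    have h3 : C.NP (w₀ (-(w₀ α))) := C.NP_apply hw₀ h2
    have h4 : C.NN (w₀ (w₀ α)) := by
      intro m
      have := h3 m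
      rw [map_neg, C.cf_neg] at this
      linarith
    have h5 : w₀ (w₀ α) ∈ C.Φ := C.W_maps_root hw₀W (C.W_maps_root hw₀W hΦ)
    refine C.root_not_both h5 ⟨h4, ?_⟩
    intro m
    have := hNP m
    rwa [mul_apply'] at this
  have hW : w₀ * w₀ ∈ C.W := C.W.mul_mem hw₀W hw₀W
  refine C.eq_one_of_length_zero hW ?_
  have := C.length_le_N hW
  omega

lemma N_mul_w0 (g : V ≃ₗ[ℝ] V) (hg : g ∈ C.W) :
    C.N (g * w₀) + C.N g = C.posRoots.card := by
  have hkey : (C.invSet (g * w₀)).card = (C.posRoots \ C.invSet g).card := by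
    refine Finset.card_bij' (fun α _ => -(w₀ α)) (fun β _ => -(w₀ β)) ?_ ?_ ?_ ?_
    · intro α hα
      obtain ⟨hΦ, hNN, hNP⟩ := C.mem_invSet.1 hα
      have h1 : C.NP (w₀ α) := C.NP_apply hw₀ hNN
      have h2 : -(w₀ α) ∈ C.Φ := C.neg_root_mem (C.W_maps_root hw₀W hΦ)
      rw [Finset.mem_sdiff]
      refine ⟨C.mem_posRoots.2 ⟨h2, C.NN_neg_iff.2 h1⟩, fun hmem => ?_⟩
      obtain ⟨_, _, hNP'⟩ := C.mem_invSet.1 hmem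
      have : C.NN (g (w₀ α)) := by
        have := C.NP_neg_iff.1 (by rwa [map_neg] at hNP')
        exact this
      refine C.root_not_both (C.W_maps_root (C.W.mul_mem hg hw₀W) hΦ) ⟨?_, ?_⟩
      · intro m; have := this m; rwa [mul_apply']
      · exact hNP
    · intro β hβ
      rw [Finset.mem_sdiff] at hβ
      obtain ⟨hpos, hout⟩ := hβ
      obtain ⟨hΦ, hNN⟩ := C.mem_posRoots.1 hpos
      have h1 : C.NP (w₀ β) := C.NP_apply hw₀ hNN
      have h2 : -(w₀ β) ∈ C.Φ := C.neg_root_mem (C.W_maps_root hw₀W hΦ)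
      have hNNgβ : C.NN (g β) := by
        refine C.root_NN_of_not_NP (C.W_maps_root hg hΦ) fun h => ?_
        exact hout (C.mem_invSet.2 ⟨hΦ, hNN, h⟩)
      refine C.mem_invSet.2 ⟨h2, C.NN_neg_iff.2 h1, ?_⟩
      intro m
      have hw0w0 : w₀ (w₀ β) = β := by
        have := C.w0_invol hw₀W hw₀
        calc w₀ (w₀ β) = (w₀ * w₀) β := rfl
          _ = β := by rw [this]; rfl
      rw [mul_apply', map_neg, hw0w0, map_neg, C.cf_neg]
      have := hNNgβ m
      linarith
    · intro α hα
      show -(w₀ (-(w₀ α))) = α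
      rw [map_neg, neg_neg]
      calc w₀ (w₀ α) = (w₀ * w₀) α := rfl
        _ = α := by rw [C.w0_invol hw₀W hw₀]; rfl
    · intro β hβ
      show -(w₀ (-(w₀ β))) = β
      rw [map_neg, neg_neg]
      calc w₀ (w₀ β) = (w₀ * w₀) β := rfl
        _ = β := by rw [C.w0_invol hw₀W hw₀]; rfl
  have hsub : C.invSet g ⊆ C.posRoots := Finset.filter_subset _ _
  unfold N
  rw [hkey, Finset.card_sdiff_of_subset hsub]
  have := Finset.card_le_card hsub
  omega

lemma length_w0_eq (g : V ≃ₗ[ℝ] V) (hg : g ∈ C.W) :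
    C.length (g * w₀) + C.length g = C.posRoots.card := by
  rw [C.length_eq_N (C.W.mul_mem hg hw₀W), C.length_eq_N hg, C.N_mul_w0 hw₀W hw₀ g hg]

omit hw₀W hw₀

lemma bruhat_mem {x y : V ≃ₗ[ℝ] V} (h : C.BruhatLE x y) (hx : x ∈ C.W) : y ∈ C.W := by
  induction h with
  | refl => exact hx
  | tail _ hbc ih =>
    obtain ⟨⟨α, hα, rfl⟩, _⟩ := hbc
    exact C.W.mul_mem ih (C.s_mem hα)

include hw₀W hw₀

lemma bruhat_w0_reverse {x y : V ≃ₗ[ℝ] V} (hx : x ∈ C.W) (h : C.BruhatLE x y) :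
    C.BruhatLE (y * w₀) (x * w₀) := by
  induction h with
  | refl => exact Relation.ReflTransGen.refl
  | tail hxb hbc ih =>
    rename_i b c
    have hbW : b ∈ C.W := C.bruhat_mem hxb hx
    obtain ⟨⟨α, hα, rfl⟩, hlen⟩ := hbc
    have hcW : b * C.s α ∈ C.W := C.W.mul_mem hbW (C.s_mem hα)
    refine Relation.ReflTransGen.head ⟨⟨w₀⁻¹ α, C.W_maps_root (C.W.inv_mem hw₀W) hα, ?_⟩, ?_⟩ ih
    · rw [← C.conj_s (C.W.inv_mem hw₀W) hα, inv_inv]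
      symm
      calc b * C.s α * w₀ * (w₀⁻¹ * C.s α * w₀)
          = b * C.s α * (w₀ * w₀⁻¹) * C.s α * w₀ := by group
        _ = b * C.s α * C.s α * w₀ := by rw [mul_inv_cancel, mul_one]
        _ = b * w₀ := by rw [mul_assoc b, C.s_mul_self hα, mul_one]
    · have h1 := C.length_w0_eq hw₀W hw₀ b hbW
      have h2 := C.length_w0_eq hw₀W hw₀ (b * C.s α) hcW
      omega

end W0

end RootSystemData

namespace RootSystemData

variable {V : Type} [NormedAddCommGroup V] [InnerProductSpace ℝ V] [FiniteDimensional ℝ V]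
variable (C : RootSystemData V)

lemma wordProd_fix {J : Set (Fin C.r)} {v : V} (h : ∀ i ∈ J, pairing v (C.π i) = 0) :
    ∀ l : List (Fin C.r), (∀ k ∈ l, k ∈ J) → C.wordProd l v = v := by
  intro l
  induction l with
  | nil => simp
  | cons k t ih =>
    intro hl
    have hk : k ∈ J := hl k List.mem_cons_self
    rw [C.wordProd_cons, mul_apply', ih (fun k' hk' => hl k' (List.mem_cons_of_mem k hk')),
      C.s_apply'' (C.simple_mem k), h k hk, zero_smul, sub_zero]

lemma parabolic_fix {J : Set (Fin C.r)} {v : V} (h : ∀ i ∈ J, pairing v (C.π i) = 0) :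
    ∀ g ∈ C.parabolicSubgroup J, g v = v := by
  intro g hg
  obtain ⟨l, hl, rfl⟩ := C.parabolic_word hg
  exact C.wordProd_fix h l hl

lemma inner_expand (a x : V) : ⟪a, x⟫_ℝ = ∑ i, C.cf x i * ⟪a, C.π i⟫_ℝ := by
  calc ⟪a, x⟫_ℝ = ⟪a, ∑ i, C.cf x i • C.π i⟫_ℝ := by rw [← C.cf_eq x]
    _ = ∑ i, C.cf x i * ⟪a, C.π i⟫_ℝ := by
        rw [inner_sum]
        exact Finset.sum_congr rfl fun i _ => real_inner_smul_right _ _ _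

end RootSystemData

open RootSystemData



/-- Let `ϖ ∈ X` be dominant with `(ϖ, α∨) ≤ 1` for every simple `α`, let
`λ = wϖ` with `w` of minimal length, and suppose `(ϖ, α_j∨) = 1` and `ℓ(w s_j) > ℓ(w)` for
some simple `α_j`.  Then every `μ ∈ w(ϖ - ω_j) + Wω_j` satisfies `(μ,μ) ≤ (ϖ,ϖ)`; if
`(μ,μ) = (ϖ,ϖ)` then `μ = vϖ` for some `v ≥ w`; and consequently `μ ≤ₐ λ`. -/
theorem statement_6
    {V : Type} [NormedAddCommGroup V] [InnerProductSpace ℝ V] [FiniteDimensional ℝ V]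
    (C : RootSystemData V)
    (ϖ lam : V) (hX : ϖ ∈ C.X) (hdom : C.IsDominant ϖ)
    (hsmall : ∀ i, pairing ϖ (C.π i) ≤ 1)
    (w : V ≃ₗ[ℝ] V) (hw : w ∈ C.W) (hlam : lam = w ϖ)
    (hmin : ∀ u ∈ C.W, u ϖ = lam → C.length w ≤ C.length u)
    (j : Fin C.r) (hj1 : pairing ϖ (C.π j) = 1)
    (hj2 : C.length w < C.length (w * C.s (C.π j)))
    (μ : V) (z : V ≃ₗ[ℝ] V) (hz : z ∈ C.W) (hμ : μ = w (ϖ - C.ω j) + z (C.ω j)) :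
    ⟪μ, μ⟫_ℝ ≤ ⟪ϖ, ϖ⟫_ℝ ∧
    (⟪μ, μ⟫_ℝ = ⟪ϖ, ϖ⟫_ℝ → ∃ v ∈ C.W, C.BruhatLE w v ∧ μ = v ϖ) ∧
    C.AntiLE μ lam := by
  classical
  set a := ϖ - C.ω j with ha
  have hωdom : C.IsDominant (C.ω j) := by
    intro i
    have : pairing (C.ω j) (C.π i) = if j = i then 1 else 0 := C.fund j i
    rw [this]
    split <;> norm_num
  have hpairω : ∀ i, pairing (C.ω j) (C.π i) = if j = i then 1 else 0 := fun i => C.fund j i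
  have hadom : C.IsDominant a := by
    intro i
    rw [ha, pairing_sub_left, hpairω i]
    by_cases hij : j = i
    · rw [if_pos hij, ← hij, hj1]
      norm_num
    · rw [if_neg hij]
      have := hdom i
      linarith
  set u := w⁻¹ * z with hu
  have huW : u ∈ C.W := C.W.mul_mem (C.W.inv_mem hw) hz
  have hwu : ∀ x : V, w (u x) = z x := by
    intro x
    rw [← mul_apply', hu, mul_inv_cancel_left]
  set d := C.ω j - u (C.ω j) with hd
  have hdNN : C.NN d := C.dominant_orbit hωdom u huW
  have hϖa : ϖ = a + C.ω j := by rw [ha]; abel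
  have hμw : μ = w (a + u (C.ω j)) := by
    rw [hμ, map_add, hwu, ha]
  have hdiff : ⟪ϖ, ϖ⟫_ℝ - ⟪μ, μ⟫_ℝ = 2 * ⟪a, d⟫_ℝ := by
    have h1 : ⟪μ, μ⟫_ℝ = ⟪a + u (C.ω j), a + u (C.ω j)⟫_ℝ := by
      rw [hμw, C.inner_invariant w hw]
    have h2 : ⟪ϖ, ϖ⟫_ℝ = ⟪a + C.ω j, a + C.ω j⟫_ℝ := by rw [← hϖa]
    have h3 : ⟪u (C.ω j), u (C.ω j)⟫_ℝ = ⟪C.ω j, C.ω j⟫_ℝ := C.inner_invariant u huW _ _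
    have h4 : ⟪a, C.ω j - u (C.ω j)⟫_ℝ = ⟪a, C.ω j⟫_ℝ - ⟪a, u (C.ω j)⟫_ℝ :=
      inner_sub_right _ _ _
    rw [h1, h2, real_inner_add_add_self, real_inner_add_add_self, h3, hd, h4]
    ring
  have had0 : 0 ≤ ⟪a, d⟫_ℝ := C.inner_dom_NN hadom hdNN
  have part1 : ⟪μ, μ⟫_ℝ ≤ ⟪ϖ, ϖ⟫_ℝ := by linarith
  have part2 : ⟪μ, μ⟫_ℝ = ⟪ϖ, ϖ⟫_ℝ → ∃ v ∈ C.W, C.BruhatLE w v ∧ μ = v ϖ := by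
    intro heq
    have had : ⟪a, d⟫_ℝ = 0 := by linarith
    have hsum : ∑ i, C.cf d i * ⟪a, C.π i⟫_ℝ = 0 := by
      rw [← C.inner_expand a d, had]
    have hterm0 : ∀ i ∈ Finset.univ, C.cf d i * ⟪a, C.π i⟫_ℝ = 0 :=
      (Finset.sum_eq_zero_iff_of_nonneg fun i _ =>
        mul_nonneg (hdNN i) (C.inner_simple_nonneg hadom i)).1 hsum
    set J : Set (Fin C.r) := {i | ⟪a, C.π i⟫_ℝ = 0} with hJ
    have hsuppd : C.suppJ J d := by
      intro m hm
      rcases mul_eq_zero.1 (hterm0 m (Finset.mem_univ m)) with h | h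
      · exact h
      · exact absurd h hm
    obtain ⟨u', hu'J, hu'ω⟩ := C.parabolic_orbit hωdom J u huW (by rw [← hd]; exact hsuppd)
    have hpairaJ : ∀ i ∈ J, pairing a (C.π i) = 0 := by
      intro i hi
      have : ⟪a, C.π i⟫_ℝ = 0 := hi
      unfold pairing
      rw [this]
      norm_num
    have hfixa : u' a = a := C.parabolic_fix hpairaJ u' hu'J
    set v := w * u' with hv
    have hu'W : u' ∈ C.W := C.parabolic_le J hu'J
    have hvW : v ∈ C.W := C.W.mul_mem hw hu'W
    have hvϖ : v ϖ = μ := by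
      rw [hv, mul_apply', hϖa, map_add, hfixa, hu'ω, hμw]
    have hWJ : ∀ i ∈ J, C.NN (w (C.π i)) := by
      intro i hi
      by_cases hij : i = j
      · subst hij
        refine C.root_NN_of_not_NP (C.W_maps_root hw (C.simple_mem i)) fun hNP => ?_
        have := C.length_descent hw hNP
        omega
      · have hpϖ : pairing ϖ (C.π i) = 0 := by
          have h0 : pairing a (C.π i) = 0 := hpairaJ i hi
          rw [ha, pairing_sub_left, hpairω i, if_neg (fun h => hij h.symm)] at h0
          linarith
        have hsϖ : C.s (C.π i) ϖ = ϖ := by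
          rw [C.s_apply'' (C.simple_mem i), hpϖ, zero_smul, sub_zero]
        have hfix : (w * C.s (C.π i)) ϖ = lam := by
          rw [mul_apply', hsϖ, ← hlam]
        have hle := hmin _ (C.W.mul_mem hw (C.s_mem (C.simple_mem i))) hfix
        refine C.root_NN_of_not_NP (C.W_maps_root hw (C.simple_mem i)) fun hNP => ?_
        have := C.length_descent hw hNP
        omega
    exact ⟨v, hvW, C.bruhat_chain hw hWJ u' hu'J, hvϖ.symm⟩
  have hlamnorm : ⟪lam, lam⟫_ℝ = ⟪ϖ, ϖ⟫_ℝ := by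
    rw [hlam]; exact C.inner_invariant w hw ϖ ϖ
  refine ⟨part1, part2, ?_⟩
  rcases lt_or_eq_of_le part1 with hlt | heq
  · left
    rw [inner_neg_neg, inner_neg_neg, hlamnorm]
    exact hlt
  · obtain ⟨v, hvW, hchain, hμv⟩ := part2 heq
    obtain ⟨w₀, hw₀W, hw₀⟩ := C.exists_w0
    have hw₀sq : ∀ x : V, w₀ (w₀ x) = x := by
      intro x
      calc w₀ (w₀ x) = (w₀ * w₀) x := rfl
        _ = x := by rw [C.w0_invol hw₀W hw₀]; rfl
    set ν := w₀ (-ϖ) with hν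
    have hνX : ν ∈ C.X := C.X_stable w₀ hw₀W _ (C.X.neg_mem hX)
    have hνdom : C.IsDominant ν := by
      intro i
      have h1 : pairing ν (C.π i) = pairing (-ϖ) (w₀ (C.π i)) := by
        have h2 := C.pairing_map hw₀W (-ϖ) (w₀ (C.π i))
        rw [hw₀sq] at h2
        rw [hν, h2]
      rw [h1]
      unfold pairing
      apply div_nonneg _ real_inner_self_nonneg
      rw [inner_neg_left]
      have := C.inner_dom_NP hdom (hw₀ i)
      linarith
    have hμν : -μ = (v * w₀) ν := by
      rw [hν, mul_apply', hw₀sq, map_neg, hμv]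
    have hlamν : -lam = (w * w₀) ν := by
      rw [hν, mul_apply', hw₀sq, map_neg, hlam]
    right
    exact ⟨ν, hνX, hνdom, v * w₀, C.W.mul_mem hvW hw₀W, w * w₀, C.W.mul_mem hw hw₀W,
      C.bruhat_w0_reverse hw₀W hw₀ hw hchain, hμν, hlamν⟩
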